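/- Let W^rec = M * N be a low-rank recurrent weight matrix, where M is an (n × K) real matrix and N is a (K × n) real matrix, let W^in be an (n × p) real matrix, b ∈ ℝ^n, τ > 0, and let f : ℝ → ℝ be applied componentwise to vectors. If r : ℝ → ℝ^n is differentiable and satisfies the leaky firing-rate RNN equation τ · r'(t) = -r(t) + f(W^rec · r(t) + W^in · u(t) + b) for all t (for a given input signal u : ℝ → ℝ^p), then the latent variable κ(t) := N · r(t) is differentiable and satisfies the self-contained latent dynamical system τ · κ'(t) = -κ(t) + N · f(M · κ(t) + W^in · u(t) + b) for all t. -/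
import Mathlib


/-- **Latent dynamics of a low-rank leaky firing-rate RNN.**
If `Wrec = M * N` is a low-rank recurrent weight matrix and `r` is a differentiable
solution of the leaky firing-rate RNN equation
`τ • r'(t) = -r(t) + f(Wrec r(t) + Win u(t) + b)` (with `f` applied componentwise),
then the latent variable `κ(t) = N r(t)` is differentiable and satisfies the
self-contained latent dynamical system
`τ • κ'(t) = -κ(t) + N f(M κ(t) + Win u(t) + b)`. -/
theorem latent_dynamics_of_lowrank_leaky_firing_rate_RNN
    {n K p : ℕ}
    (M : Matrix (Fin n) (Fin K) ℝ) (N : Matrix (Fin K) (Fin n) ℝ)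
    (Wrec : Matrix (Fin n) (Fin n) ℝ) (hW : Wrec = M * N)
    (Win : Matrix (Fin n) (Fin p) ℝ) (b : Fin n → ℝ)
    (τ : ℝ) (hτ : 0 < τ) (f : ℝ → ℝ)
    (u : ℝ → Fin p → ℝ) (r : ℝ → Fin n → ℝ)
    (hdiff : Differentiable ℝ r)
    (hdyn : ∀ t : ℝ, τ • deriv r t =
      -r t + fun i => f ((Wrec.mulVec (r t) + Win.mulVec (u t) + b) i)) :
    Differentiable ℝ (fun t => N.mulVec (r t)) ∧
    ∀ t : ℝ, τ • deriv (fun s => N.mulVec (r s)) t =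
      -(N.mulVec (r t)) +
        N.mulVec (fun i =>
          f ((M.mulVec (N.mulVec (r t)) + Win.mulVec (u t) + b) i)) := by
  let L : (Fin n → ℝ) →L[ℝ] (Fin K → ℝ) :=
    LinearMap.toContinuousLinearMap (Matrix.mulVecLin N)
  have hL : ∀ v, L v = N.mulVec v := fun v => rfl
  have hcomp : (fun t => N.mulVec (r t)) = fun t => L (r t) := rfl
  have hdiff' : Differentiable ℝ fun t => N.mulVec (r t) := by
    rw [hcomp]; exact L.differentiable.comp hdiff
  refine ⟨hdiff', fun t => ?_⟩
  have hderiv : deriv (fun s => N.mulVec (r s)) t = N.mulVec (deriv r t) := by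
    rw [hcomp]
    have h1 : HasDerivAt r (deriv r t) t := (hdiff t).hasDerivAt
    have h2 : HasDerivAt (fun s => L (r s)) (L (deriv r t)) t :=
      (L.hasFDerivAt.comp_hasDerivAt t h1)
    exact h2.deriv
  rw [hderiv, ← Matrix.mulVec_smul, hdyn t, hW]
  rw [Matrix.mulVec_add, Matrix.mulVec_neg]
  congr 1
  congr 1
  ext i
  rw [← Matrix.mulVec_mulVec]
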